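/- With parameters C = 1 and L = n/1.5, a strategy profile of the virus inoculation game with friendship factor F ∈ [0,1] is a friendship Nash equilibrium if and only if (a) every insecure player has no insecure neighbor, and (b) every inoculated player has at least one insecure neighbor. Equivalently, the set of insecure players in any FNE is an independent dominating set of G, and the set of secure players is a minimal vertex cover. -/

import Mathlib

open Finset
open scoped Classical

noncomputable section

variable {V : Type*} [Fintype V] [DecidableEq V]

/-- Reachability through insecure players: a path along edges whose endpoints are all insecure. -/
def insecureReach (G : SimpleGraph V) (a : V → Bool) : V → V → Prop :=
  Relation.ReflTransGen (fun x y => G.Adj x y ∧ a x = false ∧ a y = false)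

/-- Size of `i`'s attack component (if `i` is secure: the size of the component that would
result if `i` became insecure). -/
def compSize (G : SimpleGraph V) (a : V → Bool) (i : V) : ℕ :=
  {j | insecureReach G (Function.update a i false) i j}.ncard

/-- Actual individual cost: `C` if inoculated, else `L · k_i / n`. -/
def actualCost (G : SimpleGraph V) (C L : ℝ) (a : V → Bool) (i : V) : ℝ :=
  if a i = true then C else L * (compSize G a i) / (Fintype.card V)

def socialCost (G : SimpleGraph V) (C L : ℝ) (a : V → Bool) : ℝ :=
  ∑ i, actualCost G C L a i

/-- Perceived cost: actual cost plus `F` times the sum of the neighbors' actual costs. -/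
def perceivedCost (G : SimpleGraph V) (C L F : ℝ) (a : V → Bool) (i : V) : ℝ :=
  actualCost G C L a i +
    F * ∑ j ∈ Finset.univ.filter (fun j => G.Adj i j), actualCost G C L a j

/-- Pure Nash equilibrium: no unilateral deviation lowers the actual cost. -/
def isNE (G : SimpleGraph V) (C L : ℝ) (a : V → Bool) : Prop :=
  ∀ (i : V) (b : Bool),
    actualCost G C L a i ≤ actualCost G C L (Function.update a i b) i

/-- Friendship Nash equilibrium: no unilateral deviation lowers the perceived cost. -/
def isFNE (G : SimpleGraph V) (C L F : ℝ) (a : V → Bool) : Prop :=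
  ∀ (i : V) (b : Bool),
    perceivedCost G C L F a i ≤ perceivedCost G C L F (Function.update a i b) i

/-- Star graph on `Fin n` with center `0`. -/
def starG (n : ℕ) : SimpleGraph (Fin n) :=
  SimpleGraph.fromRel (fun i _ => i.val = 0)

/-! ### Auxiliary lemmas -/

lemma reach_mono {G : SimpleGraph V} {a a' : V → Bool}
    (h : ∀ x, a x = false → a' x = false) {i j : V}
    (hr : insecureReach G a i j) : insecureReach G a' i j :=
  Relation.ReflTransGen.mono (fun x y (hxy : G.Adj x y ∧ a x = false ∧ a y = false) =>
    (⟨hxy.1, h x hxy.2.1, h y hxy.2.2⟩ : G.Adj x y ∧ a' x = false ∧ a' y = false)) i j hr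

lemma compSize_mono {G : SimpleGraph V} {a a' : V → Bool}
    (h : ∀ x, a x = false → a' x = false) (i : V) :
    compSize G a i ≤ compSize G a' i := by
  apply Set.ncard_le_ncard _ (Set.toFinite _)
  intro j hj
  refine reach_mono (fun x hx => ?_) hj
  rcases eq_or_ne x i with rfl | hne
  · simp [Function.update_self]
  · rw [Function.update_of_ne hne] at hx ⊢
    exact h x hx

lemma one_le_compSize (G : SimpleGraph V) (a : V → Bool) (i : V) :
    1 ≤ compSize G a i := by
  have hi : i ∈ {j | insecureReach G (Function.update a i false) i j} :=
    Relation.ReflTransGen.refl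
  exact (Set.ncard_pos (Set.toFinite _)).mpr ⟨i, hi⟩

lemma two_le_compSize {G : SimpleGraph V} {a : V → Bool} {i j : V}
    (hadj : G.Adj i j) (hj : a j = false) : 2 ≤ compSize G a i := by
  have hi : i ∈ {m | insecureReach G (Function.update a i false) i m} :=
    Relation.ReflTransGen.refl
  have hjm : j ∈ {m | insecureReach G (Function.update a i false) i m} := by
    refine Relation.ReflTransGen.single ⟨hadj, ?_, ?_⟩
    · simp [Function.update_self]
    · rw [Function.update_of_ne hadj.ne']; exact hj
  have : 1 < compSize G a i := by
    rw [compSize, Set.one_lt_ncard (Set.toFinite _)]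
    exact ⟨i, hi, j, hjm, hadj.ne⟩
  omega

lemma reach_from_isolated {G : SimpleGraph V} {a : V → Bool} {i : V}
    (h : ∀ j, G.Adj i j → a j = true) {j : V}
    (hr : insecureReach G a i j) : j = i := by
  rcases Relation.ReflTransGen.cases_head hr with rfl | ⟨c, ⟨hadj, _, hc⟩, _⟩
  · rfl
  · rw [h c hadj] at hc; exact absurd hc (by simp)

lemma compSize_eq_one {G : SimpleGraph V} {a : V → Bool} {i : V}
    (h : ∀ j, G.Adj i j → a j = true) : compSize G a i = 1 := by
  have hset : {j | insecureReach G (Function.update a i false) i j} = {i} := by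
    refine Set.eq_singleton_iff_unique_mem.mpr ⟨Relation.ReflTransGen.refl, fun j hj => ?_⟩
    refine reach_from_isolated (fun m hm => ?_) hj
    rw [Function.update_of_ne hm.ne']
    exact h m hm
  rw [compSize, hset, Set.ncard_singleton]

lemma cost_sec {G : SimpleGraph V} {L : ℝ} {a : V → Bool} {m : V} (hm : a m = true) :
    actualCost G 1 L a m = 1 := by
  simp [actualCost, hm]

lemma cost_ins {G : SimpleGraph V} (hn : 0 < Fintype.card V) {a : V → Bool} {m : V}
    (hm : a m = false) :
    actualCost G 1 ((Fintype.card V : ℝ) / 1.5) a m = 2 * (compSize G a m : ℝ) / 3 := by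
  have hN : (Fintype.card V : ℝ) ≠ 0 := by positivity
  rw [actualCost, if_neg (by simp [hm])]
  field_simp
  ring

lemma actualCost_update_true_le {G : SimpleGraph V} {L : ℝ} (hL : 0 ≤ L)
    {a : V → Bool} {i m : V} (hm : m ≠ i) :
    actualCost G 1 L (Function.update a i true) m ≤ actualCost G 1 L a m := by
  rw [actualCost, actualCost, Function.update_of_ne hm]
  cases ham : a m
  · rw [if_neg (by simp), if_neg (by simp)]
    have hk : compSize G (Function.update a i true) m ≤ compSize G a m := by
      refine compSize_mono (fun x hx => ?_) m
      rcases eq_or_ne x i with rfl | hne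
      · rw [Function.update_self] at hx; exact absurd hx (by simp)
      · rwa [Function.update_of_ne hne] at hx
    have hk' : (compSize G (Function.update a i true) m : ℝ) ≤ (compSize G a m : ℝ) :=
      Nat.cast_le.mpr hk
    gcongr
  · simp

lemma actualCost_le_update_false {G : SimpleGraph V} {L : ℝ} (hL : 0 ≤ L)
    {a : V → Bool} {i m : V} (hm : m ≠ i) :
    actualCost G 1 L a m ≤ actualCost G 1 L (Function.update a i false) m := by
  rw [actualCost, actualCost, Function.update_of_ne hm]
  cases ham : a m
  · rw [if_neg (by simp), if_neg (by simp)]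
    have hk : compSize G a m ≤ compSize G (Function.update a i false) m := by
      refine compSize_mono (fun x hx => ?_) m
      rcases eq_or_ne x i with rfl | hne
      · rw [Function.update_self]
      · rwa [Function.update_of_ne hne]
    have hk' : (compSize G a m : ℝ) ≤ (compSize G (Function.update a i false) m : ℝ) :=
      Nat.cast_le.mpr hk
    gcongr
  · simp

/-- Structural characterization of FNE for `C = 1`, `L = n/1.5`: a profile is a friendship Nash
equilibrium (for any `F ∈ [0,1]`) iff (a) every insecure player has only secure neighbors and
(b) every inoculated player has at least one insecure neighbor. Equivalently, the insecure
players form an independent dominating set and the secure players a minimal vertex cover. -/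
theorem stmt13 (G : SimpleGraph V) (F : ℝ) (hF0 : 0 ≤ F) (hF1 : F ≤ 1)
    (hn : 2 ≤ Fintype.card V) (a : V → Bool) :
    isFNE G 1 ((Fintype.card V : ℝ) / 1.5) F a ↔
      ((∀ i, a i = false → ∀ j, G.Adj i j → a j = true) ∧
       (∀ i, a i = true → ∃ j, G.Adj i j ∧ a j = false)) := by
  have hnpos : 0 < Fintype.card V := by omega
  set L : ℝ := (Fintype.card V : ℝ) / 1.5 with hLdef
  have hL0 : 0 ≤ L := by positivity
  constructor
  · intro h
    constructor
    · -- every insecure player has only secure neighbors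
      intro i hi j hadj
      by_contra hj'
      have hj : a j = false := by simpa using hj'
      have key := h i true
      have hk : 2 ≤ compSize G a i := two_le_compSize hadj hj
      have hci : actualCost G 1 L a i = 2 * (compSize G a i : ℝ) / 3 := cost_ins hnpos hi
      have hci' : actualCost G 1 L (Function.update a i true) i = 1 :=
        cost_sec (by simp [Function.update_self])
      have hS : ∑ m ∈ Finset.univ.filter (fun m => G.Adj i m),
          actualCost G 1 L (Function.update a i true) m ≤
          ∑ m ∈ Finset.univ.filter (fun m => G.Adj i m), actualCost G 1 L a m := by
        refine Finset.sum_le_sum fun m hm => ?_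
        have hadjm : G.Adj i m := (Finset.mem_filter.mp hm).2
        exact actualCost_update_true_le hL0 hadjm.ne'
      have h1 : (1 : ℝ) < 2 * (compSize G a i : ℝ) / 3 := by
        have : (2 : ℝ) ≤ (compSize G a i : ℝ) := by exact_mod_cast hk
        linarith
      have hSF := mul_le_mul_of_nonneg_left hS hF0
      rw [perceivedCost, perceivedCost, hci, hci'] at key
      linarith
    · -- every secure player has an insecure neighbor
      intro i hi
      by_contra h'
      push_neg at h'
      have hnb : ∀ j, G.Adj i j → a j = true := by
        intro j hadj
        have := h' j hadj
        cases hj : a j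
        · exact absurd hj this
        · rfl
      have key := h i false
      have hci : actualCost G 1 L a i = 1 := cost_sec hi
      have hnb' : ∀ j, G.Adj i j → (Function.update a i false) j = true := fun j hadj => by
        rw [Function.update_of_ne hadj.ne']; exact hnb j hadj
      have hk : compSize G (Function.update a i false) i = 1 := compSize_eq_one hnb'
      have hci' : actualCost G 1 L (Function.update a i false) i = (2 : ℝ) / 3 := by
        rw [cost_ins hnpos (by simp [Function.update_self]), hk]
        norm_num
      have hS : ∑ m ∈ Finset.univ.filter (fun m => G.Adj i m),
          actualCost G 1 L (Function.update a i false) m =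
          ∑ m ∈ Finset.univ.filter (fun m => G.Adj i m), actualCost G 1 L a m := by
        refine Finset.sum_congr rfl fun m hm => ?_
        have hadjm : G.Adj i m := (Finset.mem_filter.mp hm).2
        rw [actualCost, actualCost, Function.update_of_ne hadjm.ne', hnb m hadjm]
        simp
      rw [perceivedCost, perceivedCost, hci, hci', hS] at key
      norm_num at key
  · rintro ⟨ha, hb⟩ i b
    rcases eq_or_ne b (a i) with rfl | hne
    · rw [Function.update_eq_self]
    · cases hi : a i
      · -- a i = false, b = true
        have hbt : b = true := by
          cases b
          · exact absurd hi (by rw [hi] at hne ⊢; exact fun _ => hne rfl)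
          · rfl
        subst hbt
        have hk : compSize G a i = 1 := compSize_eq_one (ha i hi)
        have hci : actualCost G 1 L a i = (2 : ℝ) / 3 := by
          rw [cost_ins hnpos hi, hk]; norm_num
        have hci' : actualCost G 1 L (Function.update a i true) i = 1 :=
          cost_sec (by simp [Function.update_self])
        have hS : ∑ m ∈ Finset.univ.filter (fun m => G.Adj i m),
            actualCost G 1 L a m =
            ∑ m ∈ Finset.univ.filter (fun m => G.Adj i m),
              actualCost G 1 L (Function.update a i true) m := by
          refine Finset.sum_congr rfl fun m hm => ?_
          have hadjm : G.Adj i m := (Finset.mem_filter.mp hm).2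
          rw [actualCost, actualCost, Function.update_of_ne hadjm.ne', ha i hi m hadjm]
          simp
        rw [perceivedCost, perceivedCost, hci, hci', hS]
        norm_num
      · -- a i = true, b = false
        have hbf : b = false := by
          cases b
          · rfl
          · exact absurd rfl (hi ▸ hne)
        subst hbf
        obtain ⟨j, hadj, hj⟩ := hb i hi
        have hci : actualCost G 1 L a i = 1 := cost_sec hi
        have hjf : (Function.update a i false) j = false := by
          rw [Function.update_of_ne hadj.ne']; exact hj
        have hk : 2 ≤ compSize G (Function.update a i false) i := two_le_compSize hadj hjf
        have hci' : actualCost G 1 L (Function.update a i false) i =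
            2 * (compSize G (Function.update a i false) i : ℝ) / 3 :=
          cost_ins hnpos (by simp [Function.update_self])
        have h1 : (1 : ℝ) ≤ 2 * (compSize G (Function.update a i false) i : ℝ) / 3 := by
          have : (2 : ℝ) ≤ (compSize G (Function.update a i false) i : ℝ) := by
            exact_mod_cast hk
          linarith
        have hS : ∑ m ∈ Finset.univ.filter (fun m => G.Adj i m),
            actualCost G 1 L a m ≤
            ∑ m ∈ Finset.univ.filter (fun m => G.Adj i m),
              actualCost G 1 L (Function.update a i false) m := by
          refine Finset.sum_le_sum fun m hm => ?_
          have hadjm : G.Adj i m := (Finset.mem_filter.mp hm).2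
          exact actualCost_le_update_false hL0 hadjm.ne'
        have hSF := mul_le_mul_of_nonneg_left hS hF0
        rw [perceivedCost, perceivedCost, hci, hci']
        linarith
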